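/- Let S ⊆ Δ, let γ₀ ∈ Δ \ S, set S′ = S ∪ {γ₀}, and let λ ∈ V. (i) If ⟨λ, pr_S(γ₀∨)⟩ ≥ 0, then for every γ ∈ Δ \ S′: ⟨λ, pr_{S′}(γ∨)⟩ < 0 implies ⟨λ, pr_S(γ∨)⟩ < 0, and ⟨λ, pr_{S′}(γ∨)⟩ ≤ 0 implies ⟨λ, pr_S(γ∨)⟩ ≤ 0. (ii) If ⟨λ, pr_S(γ₀∨)⟩ ≤ 0, then for every γ ∈ Δ \ S′: ⟨λ, pr_S(γ∨)⟩ < 0 implies ⟨λ, pr_{S′}(γ∨)⟩ < 0, and ⟨λ, pr_S(γ∨)⟩ ≤ 0 implies ⟨λ, pr_{S′}(γ∨)⟩ ≤ 0. -/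

import Mathlib

noncomputable section

open scoped RealInnerProductSpace

variable {V : Type*} [NormedAddCommGroup V] [InnerProductSpace ℝ V] [FiniteDimensional ℝ V]

/-- The reflection in the vector `γ` (as a function). -/
def sRefl (γ v : V) : V := v - (2 * ⟪v, γ⟫ / ⟪γ, γ⟫) • γ

/-- The coroot `γ∨ = 2γ/⟨γ,γ⟩` of `γ`. -/
def coroot (γ : V) : V := (2 / ⟪γ, γ⟫) • γ

/-- The Weyl group `W`: the subgroup of linear automorphisms generated by the
reflections in the roots. -/
def weylGroup (Φ : Finset V) : Subgroup (V ≃ₗ[ℝ] V) :=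
  Subgroup.closure {w : V ≃ₗ[ℝ] V | ∃ γ ∈ Φ, ∀ v, w v = sRefl γ v}

/-- `Φ_w = {γ ∈ Φ⁺ : w⁻¹ γ ∈ −Φ⁺}`. -/
def inversions (Φpos : Finset V) (w : V ≃ₗ[ℝ] V) : Set V :=
  {γ | γ ∈ Φpos ∧ -(w.symm γ) ∈ Φpos}

/-- `ℓ(w) = #Φ_w`. -/
def len (Φpos : Finset V) (w : V ≃ₗ[ℝ] V) : ℕ := (inversions Φpos w).ncard

/-- `Φ^P = Φ ∩ span(Δ^P)`. -/
def levi (Φ ΔP : Finset V) : Set V :=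
  {γ | γ ∈ Φ ∧ γ ∈ Submodule.span ℝ (ΔP : Set V)}

/-- `W_P = {w ∈ W : Φ_w ∩ Φ^P = ∅}`, the minimal length coset representatives of `W^P\W`. -/
def minimalCosetReps (Φ Φpos ΔP : Finset V) : Set (V ≃ₗ[ℝ] V) :=
  {w | w ∈ weylGroup Φ ∧ inversions Φpos w ∩ levi Φ ΔP = ∅}

/-- `pr_S`: the orthogonal projection onto the orthogonal complement of `span S`. -/
def pr (S : Set V) (v : V) : V :=
  (((Submodule.span ℝ S)ᗮ).orthogonalProjectionOnto v : V)

/-- `Φ` is a finite (possibly non-reduced) root system spanning `V`, with base `Δ`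
and associated positive system `Φpos`. -/
structure IsRootBase (Φ Δ Φpos : Finset V) : Prop where
  span_top : Submodule.span ℝ (Φ : Set V) = ⊤
  zero_not_mem : (0 : V) ∉ Φ
  refl_mem : ∀ γ ∈ Φ, ∀ δ ∈ Φ, sRefl γ δ ∈ Φ
  base_subset_pos : (Δ : Set V) ⊆ (Φpos : Set V)
  pos_subset : (Φpos : Set V) ⊆ (Φ : Set V)
  mem_or_neg_mem : ∀ γ ∈ Φ, γ ∈ Φpos ∨ -γ ∈ Φpos
  not_mem_and_neg_mem : ∀ γ ∈ Φpos, -γ ∉ Φpos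
  indep : LinearIndependent ℝ (fun x : (Δ : Set V) => (x : V))
  pos_comb : ∀ γ ∈ Φpos, ∃ c : V → ℝ, (∀ α ∈ Δ, 0 ≤ c α) ∧ γ = ∑ α ∈ Δ, c α • α

lemma inner_self_pos' {x : V} (hx : x ≠ 0) : (0:ℝ) < ⟪x, x⟫ := by
  rw [real_inner_self_eq_norm_sq]
  exact pow_pos (norm_pos_iff.mpr hx) 2

lemma pr_mem (S : Set V) (v : V) : pr S v ∈ (Submodule.span ℝ S)ᗮ :=
  (((Submodule.span ℝ S)ᗮ).orthogonalProjectionOnto v).2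

lemma sub_pr_mem (S : Set V) (v : V) : v - pr S v ∈ Submodule.span ℝ S := by
  have : v - pr S v ∈ ((Submodule.span ℝ S)ᗮ)ᗮ :=
    Submodule.sub_starProjection_mem_orthogonal (K := (Submodule.span ℝ S)ᗮ) v
  rwa [Submodule.orthogonal_orthogonal] at this

lemma pr_eq (S : Set V) (v w : V) (hw : w ∈ (Submodule.span ℝ S)ᗮ)
    (hvw : v - w ∈ Submodule.span ℝ S) : pr S v = w :=
  Submodule.eq_starProjection_of_mem_orthogonal hw (by
    rwa [Submodule.orthogonal_orthogonal])

lemma pr_empty (v : V) : pr (∅ : Set V) v = v :=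
  pr_eq _ _ _ (by simp [Submodule.span_empty]) (by simp)

lemma pr_ne_zero {S : Set V} {u : V} (hu : u ∉ Submodule.span ℝ S) : pr S u ≠ 0 := by
  intro h0
  apply hu
  have := sub_pr_mem S u
  rwa [h0, sub_zero] at this

lemma pr_insert (S : Set V) (u : V) (hu : u ∉ Submodule.span ℝ S) (v : V) :
    pr (insert u S) v
      = pr S v - (⟪pr S v, pr S u⟫ / ⟪pr S u, pr S u⟫) • pr S u := by
  have hpne : pr S u ≠ 0 := pr_ne_zero hu
  have hpp : (0:ℝ) < ⟪pr S u, pr S u⟫ := inner_self_pos' hpne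
  set p := pr S u with hp
  set t : ℝ := ⟪pr S v, p⟫ / ⟪p, p⟫ with ht
  have husub : u - p ∈ Submodule.span ℝ S := sub_pr_mem S u
  have hspan : Submodule.span ℝ (insert u S)
      = Submodule.span ℝ S ⊔ Submodule.span ℝ {p} := by
    rw [Submodule.span_insert]
    refine le_antisymm (sup_le ?_ le_sup_left) (sup_le le_sup_right ?_)
    · rw [Submodule.span_singleton_le_iff_mem]
      have h1 : u = (u - p) + p := by abel
      rw [h1]
      exact add_mem (Submodule.mem_sup_left husub)
        (Submodule.mem_sup_right (Submodule.mem_span_singleton_self p))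
    · rw [Submodule.span_singleton_le_iff_mem]
      have h1 : p = u - (u - p) := by abel
      rw [h1]
      exact sub_mem (Submodule.mem_sup_left (Submodule.mem_span_singleton_self u))
        (Submodule.mem_sup_right husub)
  apply pr_eq
  · rw [hspan, Submodule.mem_orthogonal]
    intro x hx
    rw [Submodule.mem_sup] at hx
    obtain ⟨y, hy, z, hz, rfl⟩ := hx
    obtain ⟨c, rfl⟩ := Submodule.mem_span_singleton.mp hz
    have hp2 : ⟪p, pr S v - t • p⟫ = 0 := by
      rw [inner_sub_right, real_inner_smul_right, ht,
        div_mul_cancel₀ _ (ne_of_gt hpp), real_inner_comm, sub_self]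
    have h1 : ⟪y, pr S v - t • p⟫ = 0 := by
      rw [inner_sub_right, real_inner_smul_right]
      have hv0 : ⟪y, pr S v⟫ = 0 :=
        (Submodule.mem_orthogonal _ _).mp (pr_mem S v) y hy
      have hp0 : ⟪y, p⟫ = 0 :=
        (Submodule.mem_orthogonal _ _).mp (pr_mem S u) y hy
      rw [hv0, hp0]; ring
    have h2 : ⟪c • p, pr S v - t • p⟫ = 0 := by
      rw [real_inner_smul_left, hp2, mul_zero]
    rw [inner_add_left, h1, h2, add_zero]
  · rw [hspan]
    have h3 : v - (pr S v - t • p) = (v - pr S v) + t • p := by abel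
    rw [h3]
    exact Submodule.add_mem _ (Submodule.mem_sup_left (sub_pr_mem S v))
      (Submodule.mem_sup_right (Submodule.smul_mem _ _ (Submodule.mem_span_singleton_self p)))

lemma not_mem_span_of_indep {Δ : Finset V}
    (hind : LinearIndependent ℝ (fun x : ((Δ : Finset V) : Set V) => (x : V)))
    {S : Set V} (hS : S ⊆ (Δ : Set V)) {u : V} (hu : u ∈ (Δ : Set V)) (huS : u ∉ S) :
    u ∉ Submodule.span ℝ S := by
  have h := hind.notMem_span_image (s := {y : ((Δ : Finset V) : Set V) | (y : V) ∈ S})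
    (x := ⟨u, hu⟩) huS
  have himg : (fun x : ((Δ : Finset V) : Set V) => (x : V)) ''
      {y : ((Δ : Finset V) : Set V) | (y : V) ∈ S} = S := by
    ext z
    constructor
    · rintro ⟨y, hy, rfl⟩; exact hy
    · intro hz; exact ⟨⟨z, hS hz⟩, hz, rfl⟩
  rwa [himg] at h

lemma obtuse_pr (Δ : Finset V)
    (hind : LinearIndependent ℝ (fun x : ((Δ : Finset V) : Set V) => (x : V)))
    (hobt : ∀ α ∈ Δ, ∀ β ∈ Δ, α ≠ β → ⟪α, β⟫ ≤ 0) :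
    ∀ (s : Finset V), (s : Set V) ⊆ (Δ : Set V) →
      ∀ α ∈ (Δ : Set V), α ∉ (s : Set V) → ∀ β ∈ (Δ : Set V), β ∉ (s : Set V) → α ≠ β →
        ⟪pr (s : Set V) α, pr (s : Set V) β⟫ ≤ 0 := by
  intro s
  classical
  induction s using Finset.induction_on with
  | empty =>
    intro _ α hα _ β hβ _ hab
    rw [Finset.coe_empty, pr_empty, pr_empty]
    exact hobt α hα β hβ hab
  | @insert u s hus ih =>
    intro hsub α hα hαs β hβ hβs hab
    rw [Finset.coe_insert] at hsub hαs hβs ⊢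
    have hsub' : (s : Set V) ⊆ (Δ : Set V) := fun x hx => hsub (Set.mem_insert_of_mem u hx)
    have huΔ : u ∈ (Δ : Set V) := hsub (Set.mem_insert u _)
    have huspan : u ∉ Submodule.span ℝ (s : Set V) :=
      not_mem_span_of_indep hind hsub' huΔ (by exact_mod_cast hus)
    have hαs' : α ∉ (s : Set V) := fun h => hαs (Set.mem_insert_of_mem u h)
    have hβs' : β ∉ (s : Set V) := fun h => hβs (Set.mem_insert_of_mem u h)
    have hαu : α ≠ u := fun h => hαs (by rw [h]; exact Set.mem_insert u _)
    have hβu : β ≠ u := fun h => hβs (by rw [h]; exact Set.mem_insert u _)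
    rw [pr_insert _ u huspan α, pr_insert _ u huspan β]
    set a := pr (s : Set V) α
    set b := pr (s : Set V) β
    set p := pr (s : Set V) u
    have hd : (0:ℝ) < ⟪p, p⟫ := inner_self_pos' (pr_ne_zero huspan)
    have hABnum : ⟪a, b⟫ ≤ 0 := ih hsub' α hα hαs' β hβ hβs' hab
    have hA : ⟪a, p⟫ ≤ 0 := ih hsub' α hα hαs' u huΔ (by exact_mod_cast hus) hαu
    have hB : ⟪b, p⟫ ≤ 0 := ih hsub' β hβ hβs' u huΔ (by exact_mod_cast hus) hβu
    have expand : ⟪a - (⟪a, p⟫ / ⟪p, p⟫) • p, b - (⟪b, p⟫ / ⟪p, p⟫) • p⟫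
        = ⟪a, b⟫ - (⟪a, p⟫ * ⟪b, p⟫) / ⟪p, p⟫ := by
      simp only [inner_sub_left, inner_sub_right, real_inner_smul_left,
        real_inner_smul_right, real_inner_comm p b]
      field_simp
      ring
    rw [expand]
    have : (0:ℝ) ≤ (⟪a, p⟫ * ⟪b, p⟫) / ⟪p, p⟫ :=
      div_nonneg (by nlinarith) hd.le
    linarith

lemma indep_coeffs {Δ : Finset V}
    (hind : LinearIndependent ℝ (fun x : ((Δ : Finset V) : Set V) => (x : V)))
    (g : V → ℝ) (hg : ∑ δ ∈ Δ, g δ • δ = 0) : ∀ δ ∈ Δ, g δ = 0 := by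
  intro δ hδ
  have h2 : ∑ i : ((Δ : Finset V) : Set V), g i • (i : V) = 0 := by
    rw [← hg]
    exact Finset.sum_coe_sort Δ (fun δ => g δ • δ)
  exact Fintype.linearIndependent_iff.mp hind (fun i => g i) h2 ⟨δ, hδ⟩

lemma simple_obtuse {Φ Δ Φpos : Finset V} (h : IsRootBase Φ Δ Φpos) :
    ∀ α ∈ Δ, ∀ β ∈ Δ, α ≠ β → ⟪α, β⟫ ≤ 0 := by
  classical
  intro α hα β hβ hab
  by_contra hpos
  push_neg at hpos
  have hαΦ : α ∈ Φ := h.pos_subset (h.base_subset_pos hα)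
  have hβΦ : β ∈ Φ := h.pos_subset (h.base_subset_pos hβ)
  have hα0 : α ≠ 0 := fun e => h.zero_not_mem (e ▸ hαΦ)
  have hαα : (0:ℝ) < ⟪α, α⟫ := inner_self_pos' hα0
  set c : ℝ := 2 * ⟪β, α⟫ / ⟪α, α⟫ with hc
  have hcpos : 0 < c := by
    apply div_pos _ hαα
    nlinarith [real_inner_comm α β]
  have hrefl : β - c • α ∈ Φ := by
    have := h.refl_mem α hαΦ β hβΦ
    simpa only [sRefl, hc] using this
  rcases h.mem_or_neg_mem _ hrefl with hmem | hmem
  · obtain ⟨d, hd0, hdsum⟩ := h.pos_comb _ hmem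
    have hsum : ∑ δ ∈ Δ, ((d δ + (if δ = α then c else 0)) - (if δ = β then 1 else 0)) • δ
        = 0 := by
      simp only [sub_smul, add_smul, ite_smul, one_smul, zero_smul]
      rw [Finset.sum_sub_distrib, Finset.sum_add_distrib,
        Finset.sum_ite_eq' Δ α (fun δ => c • δ), Finset.sum_ite_eq' Δ β (fun δ => δ),
        if_pos hα, if_pos hβ, ← hdsum]
      abel
    have hz := indep_coeffs h.indep _ hsum α hα
    rw [if_pos rfl, if_neg hab] at hz
    have := hd0 α hα
    linarith
  · obtain ⟨d, hd0, hdsum⟩ := h.pos_comb _ hmem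
    rw [neg_sub] at hdsum
    have hsum : ∑ δ ∈ Δ, ((d δ - (if δ = α then c else 0)) + (if δ = β then 1 else 0)) • δ
        = 0 := by
      simp only [add_smul, sub_smul, ite_smul, one_smul, zero_smul]
      rw [Finset.sum_add_distrib, Finset.sum_sub_distrib,
        Finset.sum_ite_eq' Δ α (fun δ => c • δ), Finset.sum_ite_eq' Δ β (fun δ => δ),
        if_pos hα, if_pos hβ, ← hdsum]
      abel
    have hz := indep_coeffs h.indep _ hsum β hβ
    rw [if_neg (Ne.symm hab), if_pos rfl] at hz
    have := hd0 β hβ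
    linarith

lemma pr_smul (S : Set V) (c : ℝ) (v : V) : pr S (c • v) = c • pr S v := by
  unfold pr
  rw [map_smul]
  rfl

/-- Lemma 19.2 of the paper in the essential case
`#Δ_P^{P′} = 1`. Let `S ⊆ Δ`, `γ₀ ∈ Δ \ S`, `S′ = S ∪ {γ₀}` and `λ ∈ V`.
(i) If `⟨λ, pr_S(γ₀∨)⟩ ≥ 0` then for every `γ ∈ Δ \ S′`:
`⟨λ, pr_{S′}(γ∨)⟩ < 0 → ⟨λ, pr_S(γ∨)⟩ < 0` and
`⟨λ, pr_{S′}(γ∨)⟩ ≤ 0 → ⟨λ, pr_S(γ∨)⟩ ≤ 0`.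
(ii) If `⟨λ, pr_S(γ₀∨)⟩ ≤ 0` then for every `γ ∈ Δ \ S′`:
`⟨λ, pr_S(γ∨)⟩ < 0 → ⟨λ, pr_{S′}(γ∨)⟩ < 0` and
`⟨λ, pr_S(γ∨)⟩ ≤ 0 → ⟨λ, pr_{S′}(γ∨)⟩ ≤ 0`. -/
theorem restrictedCorootMonotonicity
    {V : Type*} [NormedAddCommGroup V] [InnerProductSpace ℝ V] [FiniteDimensional ℝ V]
    (Φ Δ Φpos : Finset V) (h : IsRootBase Φ Δ Φpos)
    (S : Set V) (hS : S ⊆ (Δ : Set V))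
    (γ₀ : V) (hγ₀ : γ₀ ∈ (Δ : Set V) \ S)
    (lam : V) :
    (0 ≤ ⟪lam, pr S (coroot γ₀)⟫ →
      ∀ γ ∈ (Δ : Set V) \ (S ∪ {γ₀}),
        (⟪lam, pr (S ∪ {γ₀}) (coroot γ)⟫ < 0 → ⟪lam, pr S (coroot γ)⟫ < 0) ∧
        (⟪lam, pr (S ∪ {γ₀}) (coroot γ)⟫ ≤ 0 → ⟪lam, pr S (coroot γ)⟫ ≤ 0)) ∧
    (⟪lam, pr S (coroot γ₀)⟫ ≤ 0 →
      ∀ γ ∈ (Δ : Set V) \ (S ∪ {γ₀}),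
        (⟪lam, pr S (coroot γ)⟫ < 0 → ⟪lam, pr (S ∪ {γ₀}) (coroot γ)⟫ < 0) ∧
        (⟪lam, pr S (coroot γ)⟫ ≤ 0 → ⟪lam, pr (S ∪ {γ₀}) (coroot γ)⟫ ≤ 0))  := by
  classical
  obtain ⟨hγ₀Δ, hγ₀S⟩ := hγ₀
  have hSfin : S.Finite := Δ.finite_toSet.subset hS
  set s : Finset V := hSfin.toFinset with hs
  have hsS : (s : Set V) = S := hSfin.coe_toFinset
  have hγ₀span : γ₀ ∉ Submodule.span ℝ S := not_mem_span_of_indep h.indep hS hγ₀Δ hγ₀S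
  have hγ₀0 : γ₀ ≠ 0 := fun e =>
    h.zero_not_mem (e ▸ h.pos_subset (h.base_subset_pos hγ₀Δ))
  have hγ₀γ₀ : (0:ℝ) < ⟪γ₀, γ₀⟫ := inner_self_pos' hγ₀0
  have key : ∀ γ ∈ (Δ : Set V) \ (S ∪ {γ₀}), ∃ t : ℝ, t ≤ 0 ∧
      pr (S ∪ {γ₀}) (coroot γ) = pr S (coroot γ) - t • pr S (coroot γ₀) := by
    rintro γ ⟨hγΔ, hγS'⟩
    have hγS : γ ∉ S := fun hh => hγS' (Or.inl hh)
    have hγγ₀ : γ ≠ γ₀ := fun hh => hγS' (Or.inr hh)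
    have hγ0 : γ ≠ 0 := fun e =>
      h.zero_not_mem (e ▸ h.pos_subset (h.base_subset_pos hγΔ))
    have hγγ : (0:ℝ) < ⟪γ, γ⟫ := inner_self_pos' hγ0
    have hU : S ∪ {γ₀} = insert γ₀ S := Set.union_singleton
    set q := pr S γ₀ with hq
    have hqne : q ≠ 0 := pr_ne_zero hγ₀span
    have hqq : (0:ℝ) < ⟪q, q⟫ := inner_self_pos' hqne
    have hobt : ⟪pr S γ, pr S γ₀⟫ ≤ 0 := by
      rw [← hsS]
      exact obtuse_pr Δ h.indep (simple_obtuse h) s (by rw [hsS]; exact hS)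
        γ hγΔ (by rw [hsS]; exact hγS) γ₀ hγ₀Δ (by rw [hsS]; exact hγ₀S) hγγ₀
    set c₀ : ℝ := 2 / ⟪γ₀, γ₀⟫ with hc₀
    have hc₀pos : 0 < c₀ := div_pos two_pos hγ₀γ₀
    have hpr₀ : pr S (coroot γ₀) = c₀ • q := pr_smul S c₀ γ₀
    set t' : ℝ := ⟪pr S (coroot γ), q⟫ / ⟪q, q⟫ with ht'
    have ht'0 : t' ≤ 0 := by
      apply div_nonpos_of_nonpos_of_nonneg _ hqq.le
      have : pr S (coroot γ) = (2 / ⟪γ, γ⟫) • pr S γ := pr_smul S _ γ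
      rw [this, real_inner_smul_left]
      have h2 : (0:ℝ) ≤ 2 / ⟪γ, γ⟫ := le_of_lt (div_pos two_pos hγγ)
      exact mul_nonpos_of_nonneg_of_nonpos h2 hobt
    refine ⟨t' / c₀, div_nonpos_of_nonpos_of_nonneg ht'0 hc₀pos.le, ?_⟩
    rw [hU, pr_insert S γ₀ hγ₀span, hpr₀, smul_smul, div_mul_cancel₀ _ (ne_of_gt hc₀pos)]
  constructor
  · intro hC γ hγ
    obtain ⟨t, ht0, heq⟩ := key γ hγ
    have hB : ⟪lam, pr (S ∪ {γ₀}) (coroot γ)⟫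
        = ⟪lam, pr S (coroot γ)⟫ - t * ⟪lam, pr S (coroot γ₀)⟫ := by
      rw [heq, inner_sub_right, real_inner_smul_right]
    have htC : t * ⟪lam, pr S (coroot γ₀)⟫ ≤ 0 :=
      mul_nonpos_of_nonpos_of_nonneg ht0 hC
    constructor <;> intro hh <;> linarith
  · intro hC γ hγ
    obtain ⟨t, ht0, heq⟩ := key γ hγ
    have hB : ⟪lam, pr (S ∪ {γ₀}) (coroot γ)⟫
        = ⟪lam, pr S (coroot γ)⟫ - t * ⟪lam, pr S (coroot γ₀)⟫ := by
      rw [heq, inner_sub_right, real_inner_smul_right]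
    have htC : 0 ≤ t * ⟪lam, pr S (coroot γ₀)⟫ := by nlinarith
    constructor <;> intro hh <;> linarith
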